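/- Let H be the digraph with vertex set {1,2,3,4} and arc set {12, 21, 23, 32, 34, 41} (a copy of C4''). Given a digraph D, let D' be the digraph obtained from D by replacing every arc uv of D with the gadget consisting of one new vertex x_{uv} and the two arcs u→x_{uv}, x_{uv}→v (so D' has no arcs between vertices of D, and the gadget vertices of different arcs are distinct). Define costs on D': for every t ∈ V(D), c_4(t) = 0 and c_1(t) = c_2(t) = c_3(t) = 1; all costs of the gadget vertices are 0. Then a homomorphism of D' to H exists, and the minimum cost of a homomorphism of D' to H equals |V(D)| − α(D). -/
import Mathlib


namespace MinHomC4PP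

/-- the target digraph: vertices 1,2,3,4 (as 0,1,2,3 : Fin 4) and arcs
{12, 21, 23, 32, 34, 41}; a copy of C4''. -/
def HArc : Fin 4 → Fin 4 → Prop := fun a b =>
  (a, b) ∈ ([(0,1),(1,0),(1,2),(2,1),(2,3),(3,0)] : List (Fin 4 × Fin 4))

/-- vertex set of D': the vertices of D together with one gadget vertex x_{uv}
for every arc e = uv of D. -/
abbrev GV (α : Type*) (Ad : α → α → Prop) : Type _ :=
  α ⊕ {p : α × α // Ad p.1 p.2}

/-- arcs of D': for each arc e = uv of D, the gadget arcs u→x_e and x_e→v. -/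
def GArc {α : Type*} (Ad : α → α → Prop) : GV α Ad → GV α Ad → Prop
  | Sum.inl u, Sum.inr e => u = e.1.1
  | Sum.inr e, Sum.inl v => v = e.1.2
  | _, _ => False

/-- costs: c_4(t) = 0 and c_1(t) = c_2(t) = c_3(t) = 1 for t ∈ V(D) (vertex 4 is
index 3 : Fin 4); all costs of gadget vertices are 0. -/
def cost {α : Type*} (Ad : α → α → Prop) : Fin 4 → GV α Ad → ℕ
  | h, Sum.inl _ => if h = 3 then 0 else 1
  | _, Sum.inr _ => 0

instance : DecidableRel HArc := fun a b => by unfold HArc; infer_instance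

lemma harc_of_three : ∀ c : Fin 4, HArc 3 c → c = 0 := by decide

lemma harc_to_three : ∀ c : Fin 4, HArc c 3 → c = 2 := by decide

lemma sum_cost {α : Type*} [Fintype α] [DecidableEq α]
    (Ad : α → α → Prop) [DecidableRel Ad] (f : GV α Ad → Fin 4) :
    (∑ w, cost Ad (f w) w)
      = (Finset.univ.filter (fun a => f (Sum.inl a) ≠ 3)).card := by
  rw [Fintype.sum_sum_type, Finset.card_filter]
  simp only [cost]
  have : ∀ a : α, (if f (Sum.inl a) = 3 then 0 else 1)
      = (if f (Sum.inl a) ≠ 3 then 1 else 0) := by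
    intro a; by_cases h : f (Sum.inl a) = 3 <;> simp [h]
  simp only [this, Finset.sum_const_zero, add_zero]

/-- the homomorphism built from an independent set S -/
def homOf {α : Type*} [DecidableEq α] (Ad : α → α → Prop) (S : Finset α) :
    GV α Ad → Fin 4
  | Sum.inl a => if a ∈ S then 3 else 1
  | Sum.inr e => if e.1.2 ∈ S then 2 else 0

lemma homOf_hom {α : Type*} [DecidableEq α] (Ad : α → α → Prop)
    (hirr : Irreflexive Ad) (S : Finset α)
    (hS : ∀ a ∈ S, ∀ b ∈ S, a ≠ b → ¬ Ad a b) :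
    ∀ x y, GArc Ad x y → HArc (homOf Ad S x) (homOf Ad S y) := by
  rintro (u | e) (v | e') h
  · exact h.elim
  · -- u → gadget
    cases h
    show HArc (homOf Ad S (Sum.inl e'.1.1)) (homOf Ad S (Sum.inr e'))
    by_cases h1 : e'.1.1 ∈ S <;> by_cases h2 : e'.1.2 ∈ S
    · exfalso
      have hne : e'.1.1 ≠ e'.1.2 := fun h => hirr e'.1.1 (h ▸ e'.2)
      exact hS _ h1 _ h2 hne e'.2
    · simp only [homOf, if_pos h1, if_neg h2]; decide
    · simp only [homOf, if_neg h1, if_pos h2]; decide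
    · simp only [homOf, if_neg h1, if_neg h2]; decide
  · -- gadget → v
    cases h
    show HArc (homOf Ad S (Sum.inr e)) (homOf Ad S (Sum.inl e.1.2))
    by_cases h2 : e.1.2 ∈ S
    · simp only [homOf, if_pos h2]; decide
    · simp only [homOf, if_neg h2]; decide
  · exact h.elim

lemma hom_indep {α : Type*} [Fintype α] [DecidableEq α]
    (Ad : α → α → Prop) [DecidableRel Ad] (f : GV α Ad → Fin 4)
    (hf : ∀ x y, GArc Ad x y → HArc (f x) (f y)) :
    ∀ a ∈ Finset.univ.filter (fun a => f (Sum.inl a) = 3),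
      ∀ b ∈ Finset.univ.filter (fun a => f (Sum.inl a) = 3),
        a ≠ b → ¬ Ad a b := by
  intro a ha b hb _ hab
  simp only [Finset.mem_filter] at ha hb
  set e : {p : α × α // Ad p.1 p.2} := ⟨(a, b), hab⟩
  have h1 : GArc Ad (Sum.inl a) (Sum.inr e) := rfl
  have h2 : GArc Ad (Sum.inr e) (Sum.inl b) := rfl
  have k1 := hf _ _ h1
  have k2 := hf _ _ h2
  rw [ha.2] at k1
  rw [hb.2] at k2
  have := harc_of_three _ k1
  have := harc_to_three _ k2
  simp_all

/-- Lemma 4.2: a homomorphism of D' to H exists, and the minimum cost of a homomorphism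
of D' to H equals |V(D)| − α(D). -/
theorem stmt14 {α : Type*} [Fintype α] [DecidableEq α]
    (Ad : α → α → Prop) [DecidableRel Ad] (hirr : Irreflexive Ad) :
    ∃ m : ℕ,
      IsGreatest {n : ℕ | ∃ S : Finset α,
        (∀ a ∈ S, ∀ b ∈ S, a ≠ b → ¬ Ad a b) ∧ S.card = n} m ∧
      (∃ f : GV α Ad → Fin 4, ∀ x y, GArc Ad x y → HArc (f x) (f y)) ∧
      IsLeast {n : ℕ | ∃ f : GV α Ad → Fin 4,
          (∀ x y, GArc Ad x y → HArc (f x) (f y)) ∧ (∑ w, cost Ad (f w) w) = n}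
        (Fintype.card α - m) := by
  set T : Set ℕ := {n : ℕ | ∃ S : Finset α,
    (∀ a ∈ S, ∀ b ∈ S, a ≠ b → ¬ Ad a b) ∧ S.card = n} with hT
  have hne : T.Nonempty := ⟨0, ∅, by simp⟩
  have hbdd : BddAbove T := by
    refine ⟨Fintype.card α, ?_⟩
    rintro n ⟨S, _, rfl⟩
    exact Finset.card_le_univ S
  set m := sSup T with hm
  have hmem : m ∈ T := Nat.sSup_mem hne hbdd
  have hgreat : IsGreatest T m := ⟨hmem, fun n hn => le_csSup hbdd hn⟩
  obtain ⟨S, hSind, hScard⟩ := hmem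
  refine ⟨m, hgreat, ⟨homOf Ad S, homOf_hom Ad hirr S hSind⟩, ?_, ?_⟩
  · -- membership: homOf Ad S has cost |V| - m
    refine ⟨homOf Ad S, homOf_hom Ad hirr S hSind, ?_⟩
    rw [sum_cost]
    have hfil : Finset.univ.filter (fun a => homOf Ad S (Sum.inl a) ≠ 3)
        = Finset.univ \ S := by
      ext a
      by_cases h : a ∈ S <;> simp [homOf, h]
    rw [hfil, Finset.card_sdiff_of_subset (Finset.subset_univ S), hScard,
      Finset.card_univ]
  · -- lower bound
    rintro n ⟨f, hf, rfl⟩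
    rw [sum_cost]
    have hfil : Finset.univ.filter (fun a => f (Sum.inl a) ≠ 3)
        = Finset.univ \ Finset.univ.filter (fun a => f (Sum.inl a) = 3) := by
      ext a
      by_cases h : f (Sum.inl a) = 3 <;> simp [h]
    rw [hfil, Finset.card_sdiff_of_subset (Finset.filter_subset _ _), Finset.card_univ]
    apply Nat.sub_le_sub_left
    exact hgreat.2 ⟨_, hom_indep Ad f hf, rfl⟩


end MinHomC4PP
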